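/- arXiv:1208.1131 — 2 statements merged into one kernel-verified Lean document; each statement's English description precedes it below -/
import Mathlib

section
/- For any even n ≥ 0, the sum over monic polynomials l of degree n/2 of the product over monic irreducible P | l of (1 + 1/|P|)^{-1} equals q^{n/2} times the sum over monic polynomials d of degree at most n/2 of (mu(d)/|d|) · prod_{P | d} 1/(|P|+1). -/
open Polynomial UniqueFactorizationMonoid
open scoped Classical

set_option linter.unusedSectionVars false

/-- The polynomial Möbius function. -/
noncomputable def polyMu {F : Type*} [Field F] (f : F[X]) : ℤ :=
  if Squarefree f then (-1) ^ Multiset.card (normalizedFactors f) else 0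

namespace SOM

variable {F : Type*} [Field F] [Fintype F]

/-- Map a coefficient vector to a monic polynomial of degree `k`. -/
noncomputable def toPoly (k : ℕ) (c : Fin k → F) : F[X] :=
  X ^ k + ∑ i : Fin k, C (c i) * X ^ (i : ℕ)

lemma coeff_lowSum (k : ℕ) (c : Fin k → F) (j : ℕ) :
    (∑ i : Fin k, C (c i) * X ^ (i : ℕ)).coeff j =
      if h : j < k then c ⟨j, h⟩ else 0 := by
  rw [finset_sum_coeff]
  simp only [coeff_C_mul, coeff_X_pow, mul_ite, mul_one, mul_zero]
  split
  · next h =>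
    rw [Finset.sum_eq_single (⟨j, h⟩ : Fin k)]
    · simp
    · intro b _ hb
      have : (b : ℕ) ≠ j := fun hbj => hb (by ext; simp [hbj])
      exact if_neg fun hj => this hj.symm
    · simp
  · next h =>
    apply Finset.sum_eq_zero
    intro i _
    have : (i : ℕ) ≠ j := fun hij => h (hij ▸ i.isLt)
    exact if_neg fun hj => this hj.symm

lemma degree_lowSum_lt (k : ℕ) (c : Fin k → F) :
    (∑ i : Fin k, C (c i) * X ^ (i : ℕ)).degree < ((k : ℕ) : WithBot ℕ) := by
  apply lt_of_le_of_lt (degree_sum_le _ _)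
  rw [Finset.sup_lt_iff (by exact_mod_cast WithBot.bot_lt_coe _)]
  intro i _
  apply lt_of_le_of_lt (degree_C_mul_X_pow_le _ _)
  exact_mod_cast i.isLt

lemma toPoly_monic (k : ℕ) (c : Fin k → F) : (toPoly k c).Monic :=
  monic_X_pow_add (degree_lowSum_lt k c)

lemma toPoly_natDegree (k : ℕ) (c : Fin k → F) : (toPoly k c).natDegree = k := by
  have h := degree_lowSum_lt k c
  have : (toPoly k c).degree = (k : ℕ) := by
    rw [toPoly, degree_add_eq_left_of_degree_lt (by rwa [degree_X_pow]), degree_X_pow]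
  exact natDegree_eq_of_degree_eq_some this

lemma toPoly_injective (k : ℕ) : Function.Injective (toPoly (F := F) k) := by
  intro c c' h
  funext i
  have := congrArg (fun p => Polynomial.coeff p i) h
  simp only [toPoly, coeff_add, coeff_lowSum] at this
  simpa [i.isLt] using this

lemma range_toPoly (k : ℕ) :
    Set.range (toPoly (F := F) k) = {p : F[X] | p.Monic ∧ p.natDegree = k} := by
  ext p
  constructor
  · rintro ⟨c, rfl⟩
    exact ⟨toPoly_monic k c, toPoly_natDegree k c⟩
  · rintro ⟨hm, hd⟩
    refine ⟨fun i => p.coeff i, ?_⟩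
    ext j
    rw [toPoly, coeff_add, coeff_lowSum, coeff_X_pow]
    rcases lt_trichotomy j k with h | h | h
    · rw [if_neg (by omega), dif_pos h, zero_add]
    · have h1 : p.coeff j = 1 := by rw [h, ← hd]; exact hm.coeff_natDegree
      rw [if_pos h, dif_neg (by omega), add_zero, h1]
    · rw [dif_neg (by omega), if_neg (by omega), add_zero]
      exact (coeff_eq_zero_of_natDegree_lt (hd ▸ h)).symm

lemma finite_M (k : ℕ) : {p : F[X] | p.Monic ∧ p.natDegree = k}.Finite := by
  rw [← range_toPoly]; exact Set.finite_range _

/-- Monic polynomials of degree exactly `k` as a finset. -/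
noncomputable def Mfin (k : ℕ) : Finset F[X] := (finite_M (F := F) k).toFinset

@[simp] lemma mem_Mfin {k : ℕ} {p : F[X]} :
    p ∈ Mfin (F := F) k ↔ p.Monic ∧ p.natDegree = k := by
  simp [Mfin]

lemma card_Mfin (k : ℕ) : (Mfin (F := F) k).card = Fintype.card F ^ k := by
  have h1 : (Mfin (F := F) k).card = {p : F[X] | p.Monic ∧ p.natDegree = k}.ncard :=
    (Set.ncard_eq_toFinset_card _ (finite_M k)).symm
  rw [h1, ← range_toPoly, ← Nat.card_coe_set_eq, Nat.card_range_of_injective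
    (toPoly_injective k), Nat.card_eq_fintype_card, Fintype.card_fun]
  simp


lemma finite_D (m : ℕ) : {p : F[X] | p.Monic ∧ p.natDegree ≤ m}.Finite := by
  apply Set.Finite.subset (Set.Finite.biUnion (Set.finite_Iic m)
    (fun k _ => finite_M (F := F) k))
  rintro p ⟨hm, hd⟩
  exact Set.mem_biUnion hd ⟨hm, rfl⟩

/-- Monic polynomials of degree at most `m` as a finset. -/
noncomputable def Dfin (m : ℕ) : Finset F[X] := (finite_D (F := F) m).toFinset

@[simp] lemma mem_Dfin {m : ℕ} {p : F[X]} :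
    p ∈ Dfin (F := F) m ↔ p.Monic ∧ p.natDegree ≤ m := by
  simp [Dfin]

/-- The number of monic polynomials of degree `m` divisible by a fixed monic `d`
with `natDegree d ≤ m` is `q ^ (m - natDegree d)`. -/
lemma card_multiples {m : ℕ} {d : F[X]} (hd : d.Monic) (hdm : d.natDegree ≤ m) :
    ((Mfin (F := F) m).filter (fun l => d ∣ l)).card =
      Fintype.card F ^ (m - d.natDegree) := by
  rw [← card_Mfin (F := F) (m - d.natDegree)]
  symm
  apply Finset.card_bij (fun t _ => d * t)
  · intro t ht
    rw [mem_Mfin] at ht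
    rw [Finset.mem_filter, mem_Mfin]
    refine ⟨⟨hd.mul ht.1, ?_⟩, dvd_mul_right d t⟩
    rw [natDegree_mul hd.ne_zero ht.1.ne_zero, ht.2]
    omega
  · intro t ht t' ht' h
    exact mul_left_cancel₀ hd.ne_zero h
  · intro l hl
    rw [Finset.mem_filter, mem_Mfin] at hl
    obtain ⟨⟨hlm, hld⟩, t, rfl⟩ := hl
    have ht0 : t ≠ 0 := by
      rintro rfl
      exact hlm.ne_zero (mul_zero d)
    have htm : t.Monic := by
      have := hlm.leadingCoeff
      rwa [leadingCoeff_mul, hd.leadingCoeff, one_mul] at this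
    refine ⟨t, ?_, rfl⟩
    rw [mem_Mfin]
    refine ⟨htm, ?_⟩
    rw [natDegree_mul hd.ne_zero ht0] at hld
    omega

/-- The finset of monic irreducible divisors of `f`. -/
noncomputable def pdiv (f : F[X]) : Finset F[X] := (normalizedFactors f).toFinset

lemma mem_pdiv {f P : F[X]} (hf : f ≠ 0) :
    P ∈ pdiv f ↔ P.Monic ∧ Irreducible P ∧ P ∣ f := by
  rw [pdiv, Multiset.mem_toFinset]
  constructor
  · intro h
    refine ⟨?_, irreducible_of_normalized_factor P h, dvd_of_mem_normalizedFactors h⟩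
    have := normalize_normalized_factor P h
    rw [← this]
    exact monic_normalize (fun h0 => by simp [h0] at h; exact
      (prime_of_normalized_factor 0 h).ne_zero rfl)
  · rintro ⟨hPm, hPi, hPd⟩
    obtain ⟨Q, hQ, hQa⟩ := exists_mem_normalizedFactors_of_dvd hf hPi hPd
    have : P = Q := hQa.eq_of_normalized hPm.normalize_eq_self
      (normalize_normalized_factor Q hQ)
    exact this ▸ hQ

lemma pdiv_set_eq {f : F[X]} (hf : f ≠ 0) :
    {P : F[X] | P.Monic ∧ Irreducible P ∧ P ∣ f} = ↑(pdiv f) := by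
  ext P
  simp [mem_pdiv hf]


lemma normalizedFactors_prod_finset (t : Finset F[X])
    (ht : ∀ P ∈ t, P.Monic ∧ Irreducible P) :
    normalizedFactors (∏ P ∈ t, P) = t.val := by
  rw [Finset.prod_eq_multiset_prod, Multiset.map_id',
    normalizedFactors_prod_eq _ (fun a ha => (ht a ha).2)]
  rw [show (t.val.map normalize) = t.val.map id from Multiset.map_congr rfl
    (fun P hP => (ht P hP).1.normalize_eq_self), Multiset.map_id]

lemma prod_finset_monic (t : Finset F[X]) (ht : ∀ P ∈ t, P.Monic ∧ Irreducible P) :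
    (∏ P ∈ t, P).Monic :=
  monic_prod_of_monic _ _ (fun P hP => (ht P hP).1)

lemma squarefree_prod_finset (t : Finset F[X]) (ht : ∀ P ∈ t, P.Monic ∧ Irreducible P) :
    Squarefree (∏ P ∈ t, P) := by
  rw [squarefree_iff_nodup_normalizedFactors (prod_finset_monic t ht).ne_zero,
    normalizedFactors_prod_finset t ht]
  exact t.nodup

lemma polyMu_prod_finset (t : Finset F[X]) (ht : ∀ P ∈ t, P.Monic ∧ Irreducible P) :
    polyMu (∏ P ∈ t, P) = (-1) ^ t.card := by
  rw [polyMu, if_pos (squarefree_prod_finset t ht), normalizedFactors_prod_finset t ht]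
  rfl

lemma pdiv_prod_finset (t : Finset F[X]) (ht : ∀ P ∈ t, P.Monic ∧ Irreducible P) :
    pdiv (∏ P ∈ t, P) = t := by
  rw [pdiv, normalizedFactors_prod_finset t ht, Finset.val_toFinset]

lemma prod_pdiv_eq {d : F[X]} (hd : d.Monic) (hsq : Squarefree d) :
    ∏ P ∈ pdiv d, P = d := by
  have hd0 := hd.ne_zero
  have hnd : (normalizedFactors d).Nodup :=
    (squarefree_iff_nodup_normalizedFactors hd0).1 hsq
  have hval : (pdiv d).val = normalizedFactors d := by
    rw [pdiv, Multiset.toFinset_val, Multiset.dedup_eq_self.2 hnd]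
  rw [Finset.prod_eq_multiset_prod, Multiset.map_id', hval]
  have hmon : (normalizedFactors d).prod.Monic := by
    have := monic_multiset_prod_of_monic (normalizedFactors d) id (fun P hP =>
      ((mem_pdiv hd0).1 (Multiset.mem_toFinset.2 hP)).1)
    simpa using this
  exact (prod_normalizedFactors hd0).eq_of_normalized hmon.normalize_eq_self
    hd.normalize_eq_self

/-- The key Möbius expansion of the Euler-type product over prime divisors of `l`. -/
lemma expand (w : F[X] → ℝ) (m : ℕ) (l : F[X]) (hl : l.Monic) (hlm : l.natDegree ≤ m) :
    ∏ P ∈ pdiv l, (1 - w P) =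
      ∑ d ∈ (Dfin (F := F) m).filter (fun d => d ∣ l),
        (polyMu d : ℝ) * ∏ P ∈ pdiv d, w P := by
  have hl0 := hl.ne_zero
  have hmem : ∀ P ∈ pdiv l, P.Monic ∧ Irreducible P ∧ P ∣ l :=
    fun P hP => (mem_pdiv hl0).1 hP
  -- restrict the RHS to squarefree divisors
  rw [← Finset.sum_filter_of_ne (p := fun d => Squarefree d)
    (by
      intro d hd hne
      by_contra hns
      apply hne
      rw [polyMu, if_neg hns]
      simp)]
  -- expand the product
  simp only [sub_eq_neg_add]
  rw [Finset.prod_add]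
  simp only [Finset.prod_const_one, mul_one]
  -- reindex subsets of `pdiv l` by squarefree divisors
  refine Finset.sum_bij' (fun t _ => ∏ P ∈ t, P) (fun d _ => pdiv d) ?hi ?hj ?li ?ri ?h
  case hi =>
    intro t ht
    rw [Finset.mem_powerset] at ht
    have ht' : ∀ P ∈ t, P.Monic ∧ Irreducible P :=
      fun P hP => ⟨(hmem P (ht hP)).1, (hmem P (ht hP)).2.1⟩
    have hdvd : (∏ P ∈ t, P) ∣ l := by
      rw [dvd_iff_normalizedFactors_le_normalizedFactors
        (prod_finset_monic t ht').ne_zero hl0, normalizedFactors_prod_finset t ht']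
      rw [Multiset.le_iff_subset t.nodup]
      intro P hP
      rw [← Multiset.mem_toFinset]
      exact ht hP
    simp only [Finset.mem_filter, mem_Dfin]
    exact ⟨⟨⟨prod_finset_monic t ht', le_trans (natDegree_le_of_dvd hdvd hl0) hlm⟩,
      hdvd⟩, squarefree_prod_finset t ht'⟩
  case hj =>
    intro d hd
    simp only [Finset.mem_filter, mem_Dfin] at hd
    rw [Finset.mem_powerset]
    intro P hP
    obtain ⟨hPm, hPi, hPd⟩ := (mem_pdiv hd.1.1.1.ne_zero).1 hP
    exact (mem_pdiv hl0).2 ⟨hPm, hPi, hPd.trans hd.1.2⟩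
  case li =>
    intro t ht
    rw [Finset.mem_powerset] at ht
    exact pdiv_prod_finset t (fun P hP => ⟨(hmem P (ht hP)).1, (hmem P (ht hP)).2.1⟩)
  case ri =>
    intro d hd
    simp only [Finset.mem_filter, mem_Dfin] at hd
    exact prod_pdiv_eq hd.1.1.1 hd.2
  case h =>
    intro t ht
    rw [Finset.mem_powerset] at ht
    have ht' : ∀ P ∈ t, P.Monic ∧ Irreducible P :=
      fun P hP => ⟨(hmem P (ht hP)).1, (hmem P (ht hP)).2.1⟩
    rw [polyMu_prod_finset t ht', pdiv_prod_finset t ht']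
    push_cast
    rw [show (fun P => -w P) = (fun P : F[X] => (-1) * w P) from funext fun P => by ring,
      Finset.prod_mul_distrib, Finset.prod_const]


lemma inv_one_add_inv {a : ℝ} (ha : 0 < a) : (1 + 1 / a)⁻¹ = 1 - 1 / (a + 1) := by
  have h1 : a + 1 ≠ 0 := by positivity
  have h2 : 1 + 1 / a = (a + 1) / a := by field_simp
  rw [h2, inv_div, eq_sub_iff_add_eq, ← add_div, div_self h1]

end SOM

/-- For even `n`,
`∑_{l monic, deg l = n/2} ∏_{P ∣ l}(1 + 1/|P|)⁻¹
  = q^{n/2} ∑_{d monic, deg d ≤ n/2} (μ(d)/|d|) ∏_{P ∣ d} 1/(|P|+1)`. -/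
theorem sum_over_monic_eq {F : Type*} [Field F] [Fintype F] (q : ℕ)
    (hq : Fintype.card F = q) (n : ℕ) (hn : Even n) :
    ∑ᶠ l ∈ {l : F[X] | l.Monic ∧ l.natDegree = n / 2},
        ∏ᶠ P ∈ {P : F[X] | P.Monic ∧ Irreducible P ∧ P ∣ l},
          (1 + 1 / (q : ℝ) ^ P.natDegree)⁻¹ =
      (q : ℝ) ^ (n / 2) *
        ∑ᶠ d ∈ {d : F[X] | d.Monic ∧ d.natDegree ≤ n / 2},
          (polyMu d : ℝ) / (q : ℝ) ^ d.natDegree *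
            ∏ᶠ P ∈ {P : F[X] | P.Monic ∧ Irreducible P ∧ P ∣ d},
              (1 / ((q : ℝ) ^ P.natDegree + 1)) := by
  classical
  have hq0 : 0 < q := hq ▸ Fintype.card_pos
  have hqR : (0 : ℝ) < (q : ℝ) := by exact_mod_cast hq0
  set m := n / 2 with hm
  set w : F[X] → ℝ := fun P => 1 / ((q : ℝ) ^ P.natDegree + 1) with hw
  have hMfin : (SOM.finite_M (F := F) m).toFinset = SOM.Mfin m := rfl
  have hDfin : (SOM.finite_D (F := F) m).toFinset = SOM.Dfin m := rfl
  rw [← Set.Finite.coe_toFinset (SOM.finite_M (F := F) m), finsum_mem_coe_finset,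
    ← Set.Finite.coe_toFinset (SOM.finite_D (F := F) m), finsum_mem_coe_finset,
    hMfin, hDfin]
  -- rewrite the RHS inner finprods
  have hRHS : ∑ d ∈ SOM.Dfin (F := F) m,
      (polyMu d : ℝ) / (q : ℝ) ^ d.natDegree *
        ∏ᶠ P ∈ {P : F[X] | P.Monic ∧ Irreducible P ∧ P ∣ d},
          (1 / ((q : ℝ) ^ P.natDegree + 1)) =
      ∑ d ∈ SOM.Dfin (F := F) m,
        (polyMu d : ℝ) / (q : ℝ) ^ d.natDegree * ∏ P ∈ SOM.pdiv d, w P := by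
    apply Finset.sum_congr rfl
    intro d hd
    rw [SOM.mem_Dfin] at hd
    rw [SOM.pdiv_set_eq hd.1.ne_zero, finprod_mem_coe_finset]
  rw [hRHS]
  calc
    ∑ l ∈ SOM.Mfin (F := F) m,
        ∏ᶠ P ∈ {P : F[X] | P.Monic ∧ Irreducible P ∧ P ∣ l},
          (1 + 1 / (q : ℝ) ^ P.natDegree)⁻¹
      = ∑ l ∈ SOM.Mfin (F := F) m, ∑ d ∈ (SOM.Dfin (F := F) m).filter (fun d => d ∣ l),
          (polyMu d : ℝ) * ∏ P ∈ SOM.pdiv d, w P := by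
        apply Finset.sum_congr rfl
        intro l hl
        rw [SOM.mem_Mfin] at hl
        rw [SOM.pdiv_set_eq hl.1.ne_zero, finprod_mem_coe_finset,
          ← SOM.expand w m l hl.1 (le_of_eq hl.2)]
        apply Finset.prod_congr rfl
        intro P hP
        have hpos : (0 : ℝ) < (q : ℝ) ^ P.natDegree := by positivity
        rw [SOM.inv_one_add_inv hpos]
    _ = ∑ d ∈ SOM.Dfin (F := F) m,
          (((SOM.Mfin (F := F) m).filter (fun l => d ∣ l)).card : ℝ) *
            ((polyMu d : ℝ) * ∏ P ∈ SOM.pdiv d, w P) := by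
        simp only [Finset.sum_filter]
        rw [Finset.sum_comm]
        apply Finset.sum_congr rfl
        intro d _
        rw [← Finset.sum_filter, Finset.sum_const, nsmul_eq_mul]
    _ = ∑ d ∈ SOM.Dfin (F := F) m,
          (q : ℝ) ^ m * ((polyMu d : ℝ) / (q : ℝ) ^ d.natDegree * ∏ P ∈ SOM.pdiv d, w P) := by
        apply Finset.sum_congr rfl
        intro d hd
        rw [SOM.mem_Dfin] at hd
        rw [SOM.card_multiples hd.1 hd.2, hq]
        push_cast
        rw [pow_sub₀ (q : ℝ) hqR.ne' hd.2]
        field_simp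
    _ = (q : ℝ) ^ m * ∑ d ∈ SOM.Dfin (F := F) m,
          (polyMu d : ℝ) / (q : ℝ) ^ d.natDegree * ∏ P ∈ SOM.pdiv d, w P := by
        rw [Finset.mul_sum]
end

section
/- The tail sum over monic polynomials d of degree > m of (mu(d)/|d|) · prod_{P | d} 1/(|P|+1) is bounded in absolute value by a constant times q^{-m} (indeed by q^{-m}·q/(q-1)). -/
open Polynomial UniqueFactorizationMonoid
open scoped Classical

lemma factors_set_eq {F : Type*} [Field F] {d : F[X]} (hd : d ≠ 0) :
    {P : F[X] | P.Monic ∧ Irreducible P ∧ P ∣ d} = ↑(normalizedFactors d).toFinset := by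
  ext P
  simp only [Set.mem_setOf_eq, Finset.coe_sort_coe, Multiset.mem_toFinset, Finset.mem_coe]
  constructor
  · rintro ⟨hm, hi, hdvd⟩
    obtain ⟨Q, hQ, hassoc⟩ := exists_mem_normalizedFactors_of_dvd hd hi hdvd
    have hQ0 : Q ≠ 0 := (irreducible_of_normalized_factor _ hQ).ne_zero
    have hQm : Q.Monic := by
      have := normalize_normalized_factor _ hQ
      have := monic_normalize (p := Q) hQ0
      rwa [normalize_normalized_factor _ hQ] at this
    rwa [Polynomial.eq_of_monic_of_associated hm hQm hassoc]
  · intro h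
    have h0 : P ≠ 0 := (irreducible_of_normalized_factor _ h).ne_zero
    have hm : P.Monic := by
      have := monic_normalize (p := P) h0
      rwa [normalize_normalized_factor _ h] at this
    exact ⟨hm, irreducible_of_normalized_factor _ h, dvd_of_mem_normalizedFactors h⟩

lemma prod_bound {F : Type*} [Field F] {d : F[X]} (hd : d.Monic) (hs : Squarefree d)
    {q : ℝ} (hq : 1 ≤ q) :
    ∏ P ∈ (normalizedFactors d).toFinset, (1 / (q ^ P.natDegree + 1)) ≤ 1 / q ^ d.natDegree := by
  have hd0 : d ≠ 0 := hd.ne_zero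
  have hnodup : (normalizedFactors d).Nodup :=
    (squarefree_iff_nodup_normalizedFactors hd0).mp hs
  have hmono : ∀ P ∈ normalizedFactors d, P.Monic := by
    intro P h
    have h0 : P ≠ 0 := (irreducible_of_normalized_factor _ h).ne_zero
    have := monic_normalize (p := P) h0
    rwa [normalize_normalized_factor _ h] at this
  have hdeg : ∑ P ∈ (normalizedFactors d).toFinset, P.natDegree = d.natDegree := by
    rw [Finset.sum, Multiset.toFinset_val, Multiset.dedup_eq_self.mpr hnodup]
    have hprodm : (normalizedFactors d).prod.Monic := by
      have := monic_multiset_prod_of_monic (normalizedFactors d) id hmono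
      rwa [Multiset.map_id] at this
    have hprod : (normalizedFactors d).prod = d :=
      Polynomial.eq_of_monic_of_associated hprodm hd (prod_normalizedFactors hd0)
    conv_rhs => rw [← hprod]
    rw [Polynomial.natDegree_multiset_prod_of_monic _ hmono]
  calc ∏ P ∈ (normalizedFactors d).toFinset, (1 / (q ^ P.natDegree + 1))
      ≤ ∏ P ∈ (normalizedFactors d).toFinset, (1 / q ^ P.natDegree) := by
        apply Finset.prod_le_prod
        · intro P _; positivity
        · intro P _
          apply div_le_div_of_nonneg_left one_pos.le (by positivity)
          linarith [pow_pos (lt_of_lt_of_le one_pos hq) P.natDegree]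
    _ = 1 / q ^ d.natDegree := by
        rw [← hdeg]
        rw [Finset.prod_div_distrib, Finset.prod_const_one, Finset.prod_pow_eq_pow_sum]

noncomputable instance monicFintype {F : Type*} [Field F] [Fintype F] (k : ℕ) :
    Fintype {d : F[X] // d.Monic ∧ d.natDegree = k} :=
  Fintype.ofEquiv _ ((monicEquivDegreeLT k).trans (degreeLTEquiv F k).toEquiv).symm

lemma monic_card {F : Type*} [Field F] [Fintype F] (k : ℕ) :
    Fintype.card {d : F[X] // d.Monic ∧ d.natDegree = k} = Fintype.card F ^ k := by
  rw [Fintype.card_congr ((monicEquivDegreeLT k).trans (degreeLTEquiv F k).toEquiv)]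
  simp [Fintype.card_fun]

def degreeSigmaEquiv (F : Type*) [Field F] (m : ℕ) :
    (Σ n : ℕ, {d : F[X] // d.Monic ∧ d.natDegree = m + 1 + n}) ≃
      {d : F[X] // d.Monic ∧ m < d.natDegree} where
  toFun p := ⟨p.2.1, p.2.2.1, by have := p.2.2.2; omega⟩
  invFun d := ⟨d.1.natDegree - (m + 1), ⟨d.1, d.2.1, by have := d.2.2; omega⟩⟩
  left_inv := by
    rintro ⟨n, d, hmon, hdeg⟩
    obtain rfl : n = d.natDegree - (m + 1) := by omega
    rfl
  right_inv := by rintro ⟨d, hmon, hdeg⟩; rfl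

lemma sum_bound {F : Type*} [Field F] [Fintype F] (q : ℕ) (hq : Fintype.card F = q) (m : ℕ) :
    Summable (fun d : {d : F[X] // d.Monic ∧ m < d.natDegree} =>
        (1 / (q : ℝ) ^ d.1.natDegree) ^ 2) ∧
      ∑' d : {d : F[X] // d.Monic ∧ m < d.natDegree}, (1 / (q : ℝ) ^ d.1.natDegree) ^ 2 ≤
        (1 / (q : ℝ) ^ m) * ((q : ℝ) / ((q : ℝ) - 1)) := by
  have hq2 : 2 ≤ q := hq ▸ Fintype.one_lt_card
  have hqR : (2 : ℝ) ≤ (q : ℝ) := by exact_mod_cast hq2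
  have hq0 : (0 : ℝ) < q := by linarith
  set e := degreeSigmaEquiv F m
  set f : {d : F[X] // d.Monic ∧ m < d.natDegree} → ℝ :=
    fun d => (1 / (q : ℝ) ^ d.1.natDegree) ^ 2 with hf
  -- inner sums
  have hinner : ∀ n : ℕ, ∑' d : {d : F[X] // d.Monic ∧ d.natDegree = m + 1 + n},
      f (e ⟨n, d⟩) = (1 / (q : ℝ)) ^ (m + 1 + n) := by
    intro n
    have : ∀ d : {d : F[X] // d.Monic ∧ d.natDegree = m + 1 + n},
        f (e ⟨n, d⟩) = (1 / (q : ℝ) ^ (m + 1 + n)) ^ 2 := by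
      rintro ⟨d, hmon, hdeg⟩
      show (1 / (q : ℝ) ^ d.natDegree) ^ 2 = _
      rw [hdeg]
    rw [tsum_congr this, tsum_const, Nat.card_eq_fintype_card, monic_card, hq, nsmul_eq_mul]
    have hqne : (q : ℝ) ≠ 0 := by positivity
    push_cast
    rw [one_div_pow, one_div_pow, ← pow_mul]
    field_simp
    ring
  have hinner_summable : ∀ n : ℕ, Summable fun d : {d : F[X] // d.Monic ∧ d.natDegree = m + 1 + n} =>
      f (e ⟨n, d⟩) := fun n => .of_finite
  have houter : Summable fun n : ℕ => (1 / (q : ℝ)) ^ (m + 1 + n) := by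
    have : Summable fun n : ℕ => (1 / (q : ℝ)) ^ n :=
      summable_geometric_of_lt_one (by positivity) (by rw [div_lt_one hq0]; linarith)
    simpa [pow_add] using this.mul_left ((1 / (q : ℝ)) ^ (m + 1))
  have hsig : Summable fun p : Σ n : ℕ, {d : F[X] // d.Monic ∧ d.natDegree = m + 1 + n} =>
      f (e p) := by
    rw [summable_sigma_of_nonneg (fun p => by positivity)]
    refine ⟨hinner_summable, ?_⟩
    simpa only [hinner] using houter
  have hsummable : Summable f := (Equiv.summable_iff e).mp hsig
  refine ⟨hsummable, ?_⟩
  have htsum : ∑' d, f d = ∑' n : ℕ, (1 / (q : ℝ)) ^ (m + 1 + n) := by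
    rw [← Equiv.tsum_eq e f, hsig.tsum_sigma]
    exact tsum_congr hinner
  rw [htsum]
  have hgeo : ∑' n : ℕ, (1 / (q : ℝ)) ^ (m + 1 + n) =
      (1 / (q : ℝ)) ^ (m + 1) * (1 - 1 / (q : ℝ))⁻¹ := by
    simp only [pow_add]
    rw [tsum_mul_left, tsum_geometric_of_lt_one (by positivity)
      (by rw [div_lt_one hq0]; linarith)]
  rw [hgeo]
  have h1 : (1 - 1 / (q : ℝ))⁻¹ = (q : ℝ) / ((q : ℝ) - 1) := by
    have hq' : (1 : ℝ) - 1 / q = ((q : ℝ) - 1) / q := by field_simp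
    rw [hq', inv_div]
  rw [h1, pow_succ]
  have h2 : (1 / (q : ℝ)) ^ m ≤ 1 / (q : ℝ) ^ m := by rw [div_pow, one_pow]
  have h3 : (0 : ℝ) < (q : ℝ) / ((q : ℝ) - 1) := div_pos (by linarith) (by linarith)
  calc (1 / (q : ℝ)) ^ m * (1 / (q : ℝ)) * ((q : ℝ) / ((q : ℝ) - 1))
      ≤ (1 / (q : ℝ)) ^ m * 1 * ((q : ℝ) / ((q : ℝ) - 1)) := by
        apply mul_le_mul_of_nonneg_right _ h3.le
        apply mul_le_mul_of_nonneg_left _ (by positivity)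
        rw [div_le_one hq0]; linarith
    _ = (1 / (q : ℝ)) ^ m * ((q : ℝ) / ((q : ℝ) - 1)) := by ring
    _ ≤ (1 / (q : ℝ) ^ m) * ((q : ℝ) / ((q : ℝ) - 1)) := by
        apply mul_le_mul_of_nonneg_right h2 h3.le

/-- The tail sum over monic `d` of degree `> m` of `(μ(d)/|d|) ∏_{P ∣ d} 1/(|P|+1)`
is bounded by `q^{-m} · q/(q-1)`. -/
theorem tail_sum_bound {F : Type*} [Field F] [Fintype F] (q : ℕ)
    (hq : Fintype.card F = q) (m : ℕ) :
    |∑' d : {d : F[X] // d.Monic ∧ m < d.natDegree},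
        ((polyMu d.1 : ℝ) / (q : ℝ) ^ d.1.natDegree *
          ∏ᶠ P ∈ {P : F[X] | P.Monic ∧ Irreducible P ∧ P ∣ d.1},
            (1 / ((q : ℝ) ^ P.natDegree + 1)))| ≤
      (1 / (q : ℝ) ^ m) * ((q : ℝ) / ((q : ℝ) - 1)) := by
  have hq2 : 2 ≤ q := hq ▸ Fintype.one_lt_card
  have hqR : (2 : ℝ) ≤ (q : ℝ) := by exact_mod_cast hq2
  have hq0 : (0 : ℝ) < q := by linarith
  obtain ⟨hsum, hbound⟩ := sum_bound q hq m
  set f : {d : F[X] // d.Monic ∧ m < d.natDegree} → ℝ := fun d =>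
    ((polyMu d.1 : ℝ) / (q : ℝ) ^ d.1.natDegree *
      ∏ᶠ P ∈ {P : F[X] | P.Monic ∧ Irreducible P ∧ P ∣ d.1},
        (1 / ((q : ℝ) ^ P.natDegree + 1))) with hfdef
  have hpt : ∀ d : {d : F[X] // d.Monic ∧ m < d.natDegree},
      |f d| ≤ (1 / (q : ℝ) ^ d.1.natDegree) ^ 2 := by
    rintro ⟨p, hm, hdeg⟩
    by_cases hsq : Squarefree p
    · have hp0 : p ≠ 0 := hm.ne_zero
      show |(polyMu p : ℝ) / (q : ℝ) ^ p.natDegree * _| ≤ _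
      rw [factors_set_eq hp0, finprod_mem_coe_finset]
      have hprodpos : 0 ≤ ∏ P ∈ (normalizedFactors p).toFinset,
          (1 / ((q : ℝ) ^ P.natDegree + 1)) :=
        Finset.prod_nonneg fun P _ => by positivity
      have hmu : |(polyMu p : ℝ)| = 1 := by
        simp [polyMu, hsq, abs_pow]
      rw [abs_mul, abs_div, hmu, abs_of_nonneg hprodpos,
        abs_of_nonneg (by positivity : (0:ℝ) ≤ (q : ℝ) ^ p.natDegree), sq]
      exact mul_le_mul_of_nonneg_left (prod_bound hm hsq (by linarith)) (by positivity)
    · have : polyMu p = 0 := by simp [polyMu, hsq]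
      show |(polyMu p : ℝ) / (q : ℝ) ^ p.natDegree * _| ≤ _
      rw [this]
      simp only [Int.cast_zero, zero_div, zero_mul, abs_zero]
      positivity
  have hnorm : ∀ d, ‖f d‖ ≤ (1 / (q : ℝ) ^ d.1.natDegree) ^ 2 := by
    simpa [Real.norm_eq_abs] using hpt
  have hsf : Summable fun d => ‖f d‖ :=
    Summable.of_nonneg_of_le (fun d => norm_nonneg _) hnorm hsum
  calc |∑' d, f d| ≤ ∑' d, ‖f d‖ := by
        simpa [Real.norm_eq_abs] using norm_tsum_le_tsum_norm hsf
    _ ≤ ∑' d : {d : F[X] // d.Monic ∧ m < d.natDegree}, (1 / (q : ℝ) ^ d.1.natDegree) ^ 2 :=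
        Summable.tsum_le_tsum hnorm hsf hsum
    _ ≤ (1 / (q : ℝ) ^ m) * ((q : ℝ) / ((q : ℝ) - 1)) := hbound
end
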